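/- Let G and H be connected finite simple graphs of order n₁ ≥ 2 and n₂ ≥ 2, with maximum degrees Δ₁ and Δ₂, respectively. If Δ₁ ≠ n₁ − 1 or Δ₂ ≠ n₂ − 1, then ϖ(G + H) = ϖ(G) + ϖ(H). -/

import Mathlib

open SimpleGraph

/-- A vertex `w` strongly resolves the pair `u`, `v` if `v` lies on some shortest `u`–`w`
path or `u` lies on some shortest `v`–`w` path. -/
def StronglyResolves {V : Type*} (G : SimpleGraph V) (w u v : V) : Prop :=
  G.dist u w = G.dist u v + G.dist v w ∨ G.dist v w = G.dist v u + G.dist u w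

/-- `S` is a strong resolving set for `G` if every pair of distinct vertices is strongly
resolved by some vertex of `S`. -/
def IsStrongResolvingSet {V : Type*} (G : SimpleGraph V) (S : Set V) : Prop :=
  ∀ u v : V, u ≠ v → ∃ w ∈ S, StronglyResolves G w u v

/-- The strong metric dimension: the minimum cardinality of a strong resolving set. -/
noncomputable def strongDim {V : Type*} (G : SimpleGraph V) [Fintype V] : ℕ :=
  sInf {k | ∃ S : Finset V, IsStrongResolvingSet G ↑S ∧ S.card = k}

/-- The closed neighborhood of a vertex. -/
def closedNbhd {V : Type*} (G : SimpleGraph V) (v : V) : Set V :=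
  insert v (G.neighborSet v)

/-- A twin-free clique: a clique containing no pair of true twins. -/
def IsTwinFreeClique {V : Type*} (G : SimpleGraph V) (X : Finset V) : Prop :=
  G.IsClique ↑X ∧ ∀ u ∈ X, ∀ v ∈ X, u ≠ v → closedNbhd G u ≠ closedNbhd G v

/-- The twin-free clique number: maximum cardinality of a twin-free clique. -/
noncomputable def twinFreeCliqueNum {V : Type*} (G : SimpleGraph V) [Fintype V] : ℕ :=
  sSup {k | ∃ X : Finset V, IsTwinFreeClique G X ∧ X.card = k}

/-- Adjacency relation of the join of two graphs. -/
def joinAdj {V W : Type*} (G : SimpleGraph V) (H : SimpleGraph W) :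
    V ⊕ W → V ⊕ W → Prop
  | Sum.inl a, Sum.inl b => G.Adj a b
  | Sum.inr a, Sum.inr b => H.Adj a b
  | Sum.inl _, Sum.inr _ => True
  | Sum.inr _, Sum.inl _ => True

/-- The join `G + H`: disjoint union of `G` and `H` plus all edges between them. -/
def joinGraph {V W : Type*} (G : SimpleGraph V) (H : SimpleGraph W) :
    SimpleGraph (V ⊕ W) where
  Adj := joinAdj G H
  symm := by
    constructor
    rintro (a | a) (b | b) h
    · exact G.adj_symm h
    · trivial
    · trivial
    · exact H.adj_symm h
  loopless := by
    constructor
    rintro (a | a) h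
    · exact G.loopless.1 a h
    · exact H.loopless.1 a h

/-- Adjacency relation of the corona product `G ⊙ H`. -/
def coronaAdj {V W : Type*} (G : SimpleGraph V) (H : SimpleGraph W) :
    V ⊕ V × W → V ⊕ V × W → Prop
  | Sum.inl a, Sum.inl b => G.Adj a b
  | Sum.inr p, Sum.inr q => p.1 = q.1 ∧ H.Adj p.2 q.2
  | Sum.inl a, Sum.inr q => a = q.1
  | Sum.inr p, Sum.inl b => p.1 = b

/-- The corona product `G ⊙ H`: one copy of `G` and one copy of `H` for each vertex of
`G`, with the `i`-th vertex of `G` joined to every vertex of the `i`-th copy of `H`. -/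
def corona {V W : Type*} (G : SimpleGraph V) (H : SimpleGraph W) :
    SimpleGraph (V ⊕ V × W) where
  Adj := coronaAdj G H
  symm := by
    constructor
    rintro (a | p) (b | q) h
    · exact G.adj_symm h
    · exact h.symm
    · exact h.symm
    · exact ⟨h.1.symm, H.adj_symm h.2⟩
  loopless := by
    constructor
    rintro (a | p) h
    · exact G.loopless.1 a h
    · exact H.loopless.1 p.2 h.2

/-- The disjoint union of copies of `H`, one copy for each element of `V`. -/
def copies (V : Type*) {W : Type*} (H : SimpleGraph W) : SimpleGraph (V × W) where
  Adj p q := p.1 = q.1 ∧ H.Adj p.2 q.2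
  symm := ⟨fun _ _ h => ⟨h.1.symm, h.2.symm⟩⟩
  loopless := ⟨fun p h => H.loopless.1 p.2 h.2⟩

/-- The algebraic connectivity: the second smallest eigenvalue (with multiplicity,
in nondecreasing order) of the Laplacian matrix. -/
noncomputable def algebraicConnectivity {V : Type*} (G : SimpleGraph V) [Fintype V]
    [DecidableEq V] [DecidableRel G.Adj] : ℝ :=
  (((Finset.univ.val.map ((G.posSemidef_lapMatrix ℝ).isHermitian.eigenvalues)).sort
    (· ≤ ·)).getD 1 0)

section Aux

variable {V W : Type*} {G : SimpleGraph V} {H : SimpleGraph W}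

lemma mem_closedNbhd_iff {a x : V} : x ∈ closedNbhd G a ↔ x = a ∨ G.Adj a x := by
  simp [closedNbhd]

lemma inl_mem_closedNbhd_join_inl {a v : V} :
    (Sum.inl v : V ⊕ W) ∈ closedNbhd (joinGraph G H) (Sum.inl a) ↔ v ∈ closedNbhd G a := by
  simp only [mem_closedNbhd_iff, Sum.inl.injEq]
  rfl

lemma inr_mem_closedNbhd_join_inl {a : V} (w : W) :
    (Sum.inr w : V ⊕ W) ∈ closedNbhd (joinGraph G H) (Sum.inl a) := by
  apply mem_closedNbhd_iff.mpr
  right; trivial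

lemma inr_mem_closedNbhd_join_inr {b w : W} :
    (Sum.inr w : V ⊕ W) ∈ closedNbhd (joinGraph G H) (Sum.inr b) ↔ w ∈ closedNbhd H b := by
  simp only [mem_closedNbhd_iff, Sum.inr.injEq]
  rfl

lemma inl_mem_closedNbhd_join_inr {b : W} (v : V) :
    (Sum.inl v : V ⊕ W) ∈ closedNbhd (joinGraph G H) (Sum.inr b) := by
  apply mem_closedNbhd_iff.mpr
  right; trivial

lemma twin_join_inl_iff {a b : V} :
    closedNbhd (joinGraph G H) (Sum.inl a) = closedNbhd (joinGraph G H) (Sum.inl b) ↔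
      closedNbhd G a = closedNbhd G b := by
  constructor
  · intro he
    ext v
    rw [← @inl_mem_closedNbhd_join_inl V W G H, ← @inl_mem_closedNbhd_join_inl V W G H, he]
  · intro he
    ext x
    cases x with
    | inl v => rw [inl_mem_closedNbhd_join_inl, inl_mem_closedNbhd_join_inl, he]
    | inr w => simp [inr_mem_closedNbhd_join_inl]

lemma twin_join_inr_iff {a b : W} :
    closedNbhd (joinGraph G H) (Sum.inr a) = closedNbhd (joinGraph G H) (Sum.inr b) ↔
      closedNbhd H a = closedNbhd H b := by
  constructor
  · intro he
    ext w
    rw [← @inr_mem_closedNbhd_join_inr V W G H, ← @inr_mem_closedNbhd_join_inr V W G H, he]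
  · intro he
    ext x
    cases x with
    | inl v => simp [inl_mem_closedNbhd_join_inr]
    | inr w => rw [inr_mem_closedNbhd_join_inr, inr_mem_closedNbhd_join_inr, he]

lemma exists_not_mem_closedNbhd [Fintype V] [DecidableRel G.Adj]
    (h : G.maxDegree ≠ Fintype.card V - 1) (a : V) :
    ∃ c, c ∉ closedNbhd G a := by
  classical
  by_contra hc
  push_neg at hc
  have hdeg : G.degree a = Fintype.card V - 1 := by
    have hnb : G.neighborFinset a = Finset.univ.erase a := by
      ext v
      simp only [SimpleGraph.mem_neighborFinset, Finset.mem_erase, Finset.mem_univ, and_true]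
      constructor
      · exact fun hv => (G.ne_of_adj hv).symm
      · intro hv
        rcases mem_closedNbhd_iff.mp (hc v) with h1 | h1
        · exact absurd h1 hv
        · exact h1
    rw [SimpleGraph.degree, hnb, Finset.card_erase_of_mem (Finset.mem_univ a),
      Finset.card_univ]
  apply h
  apply le_antisymm
  · apply G.maxDegree_le_of_forall_degree_le
    intro v
    exact Nat.le_sub_one_of_lt (G.degree_lt_card_verts v)
  · rw [← hdeg]; exact G.degree_le_maxDegree a

lemma tfc_bddAbove (G : SimpleGraph V) [Fintype V] :
    BddAbove {k | ∃ X : Finset V, IsTwinFreeClique G X ∧ X.card = k} := by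
  refine ⟨Fintype.card V, ?_⟩
  rintro k ⟨X, _, rfl⟩
  exact X.card_le_univ

lemma card_le_tfc [Fintype V] {X : Finset V} (hX : IsTwinFreeClique G X) :
    X.card ≤ twinFreeCliqueNum G :=
  le_csSup (tfc_bddAbove G) ⟨X, hX, rfl⟩

lemma exists_max_tfc (G : SimpleGraph V) [Fintype V] :
    ∃ X : Finset V, IsTwinFreeClique G X ∧ X.card = twinFreeCliqueNum G := by
  have hmem : twinFreeCliqueNum G ∈
      {k | ∃ X : Finset V, IsTwinFreeClique G X ∧ X.card = k} := by
    apply Nat.sSup_mem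
    · exact ⟨0, ∅, ⟨by simp [SimpleGraph.IsClique], by simp⟩, rfl⟩
    · exact tfc_bddAbove G
  exact hmem

end Aux

/-- If `G`, `H` are connected graphs of order `n₁, n₂ ≥ 2` with maximum
degrees `Δ₁ ≠ n₁ − 1` or `Δ₂ ≠ n₂ − 1`, then `ϖ(G + H) = ϖ(G) + ϖ(H)`. -/
theorem twinFreeCliqueNum_join {V W : Type*} [Fintype V] [Fintype W]
    (G : SimpleGraph V) (H : SimpleGraph W) [DecidableRel G.Adj] [DecidableRel H.Adj]
    (hG : G.Connected) (hH : H.Connected)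
    (hn1 : 2 ≤ Fintype.card V) (hn2 : 2 ≤ Fintype.card W)
    (h : G.maxDegree ≠ Fintype.card V - 1 ∨ H.maxDegree ≠ Fintype.card W - 1) :
    twinFreeCliqueNum (joinGraph G H) = twinFreeCliqueNum G + twinFreeCliqueNum H := by
  classical
  have hcross : ∀ (a : V) (b : W),
      closedNbhd (joinGraph G H) (Sum.inl a) ≠ closedNbhd (joinGraph G H) (Sum.inr b) := by
    intro a b heq
    cases h with
    | inl hG' =>
      obtain ⟨c, hc⟩ := exists_not_mem_closedNbhd hG' a
      apply hc
      rw [← @inl_mem_closedNbhd_join_inl V W G H, heq]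
      exact inl_mem_closedNbhd_join_inr c
    | inr hH' =>
      obtain ⟨c, hc⟩ := exists_not_mem_closedNbhd hH' b
      apply hc
      rw [← @inr_mem_closedNbhd_join_inr V W G H, ← heq]
      exact inr_mem_closedNbhd_join_inl c
  apply le_antisymm
  · -- upper bound
    obtain ⟨X, hX, hcard⟩ := exists_max_tfc (joinGraph G H)
    rw [← hcard, ← Finset.card_toLeft_add_card_toRight]
    have hL : IsTwinFreeClique G X.toLeft := by
      constructor
      · intro a ha b hb hab
        have := hX.1 (Finset.mem_coe.mpr (Finset.mem_toLeft.mp ha))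
          (Finset.mem_coe.mpr (Finset.mem_toLeft.mp hb))
          (fun he => hab (Sum.inl_injective he))
        exact this
      · intro a ha b hb hab heq
        exact hX.2 (Sum.inl a) (Finset.mem_toLeft.mp ha) (Sum.inl b)
          (Finset.mem_toLeft.mp hb) (fun he => hab (Sum.inl_injective he))
          (twin_join_inl_iff.mpr heq)
    have hR : IsTwinFreeClique H X.toRight := by
      constructor
      · intro a ha b hb hab
        have := hX.1 (Finset.mem_coe.mpr (Finset.mem_toRight.mp ha))
          (Finset.mem_coe.mpr (Finset.mem_toRight.mp hb))
          (fun he => hab (Sum.inr_injective he))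
        exact this
      · intro a ha b hb hab heq
        exact hX.2 (Sum.inr a) (Finset.mem_toRight.mp ha) (Sum.inr b)
          (Finset.mem_toRight.mp hb) (fun he => hab (Sum.inr_injective he))
          (twin_join_inr_iff.mpr heq)
    exact Nat.add_le_add (card_le_tfc hL) (card_le_tfc hR)
  · -- lower bound
    obtain ⟨A, hA, hAcard⟩ := exists_max_tfc G
    obtain ⟨B, hB, hBcard⟩ := exists_max_tfc H
    rw [← hAcard, ← hBcard, ← Finset.card_disjSum]
    apply card_le_tfc
    constructor
    · rintro (a | a) ha (b | b) hb hab
      · exact hA.1 (Finset.mem_coe.mpr (Finset.inl_mem_disjSum.mp ha))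
          (Finset.mem_coe.mpr (Finset.inl_mem_disjSum.mp hb))
          (fun he => hab (he ▸ rfl))
      · trivial
      · trivial
      · exact hB.1 (Finset.mem_coe.mpr (Finset.inr_mem_disjSum.mp ha))
          (Finset.mem_coe.mpr (Finset.inr_mem_disjSum.mp hb))
          (fun he => hab (he ▸ rfl))
    · rintro (a | a) ha (b | b) hb hab heq
      · exact hA.2 a (Finset.inl_mem_disjSum.mp ha) b (Finset.inl_mem_disjSum.mp hb)
          (fun he => hab (he ▸ rfl)) (twin_join_inl_iff.mp heq)
      · exact hcross a b heq
      · exact hcross b a heq.symm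
      · exact hB.2 a (Finset.inr_mem_disjSum.mp ha) b (Finset.inr_mem_disjSum.mp hb)
          (fun he => hab (he ▸ rfl)) (twin_join_inr_iff.mp heq)
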